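/- Consider the uniform-strength CN model with γ ≥ 1. There is no nonempty CN-war-stable network whose maximum degree is at most 1. That is, if every country has at most one ally and the network is nonempty, then one of conditions (S1), (S2), (S3) fails. -/
import Mathlib


open Finset

/-- The allies (neighbors) of `i` in network `g`, as a `Finset`. -/
noncomputable def nbrs {V : Type*} [Fintype V] (g : SimpleGraph V) (i : V) : Finset V :=
  @Finset.filter _ (fun j => g.Adj i j) (Classical.decPred _) Finset.univ

/-- The network `g` with the alliance `jk` added. -/
def addE {V : Type*} (g : SimpleGraph V) (j k : V) : SimpleGraph V :=
  g ⊔ SimpleGraph.fromEdgeSet {s(j, k)}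

/-- The network `g` with the alliance `jk` deleted. -/
def delE {V : Type*} (g : SimpleGraph V) (j k : V) : SimpleGraph V :=
  g.deleteEdges {s(j, k)}

/-- CN-vulnerability with uniform strengths `M C = |C|` and constant `γ`:
country `i` is CN-vulnerable at `g` if some clique `C` of `g` not containing `i`
satisfies `|C| > γ · (1 + |N_i(g) \ C|)`. -/
def CNVul {V : Type*} [Fintype V] [DecidableEq V] (g : SimpleGraph V) (γ : ℝ) (i : V) :
    Prop :=
  ∃ C : Finset V, g.IsClique ↑C ∧ i ∉ C ∧
    γ * (1 + ((nbrs g i) \ C).card) < (C.card : ℝ)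

/-- CN-war-stability: (S1) no country CN-vulnerable; (S2) no country CN-vulnerable after
adding any non-link; (S3) both endpoints of any link become CN-vulnerable upon its
deletion. -/
def CNWarStable {V : Type*} [Fintype V] [DecidableEq V] (g : SimpleGraph V) (γ : ℝ) :
    Prop :=
  (∀ v : V, ¬ CNVul g γ v) ∧
  (∀ j k : V, j ≠ k → ¬ g.Adj j k → ∀ v : V, ¬ CNVul (addE g j k) γ v) ∧
  (∀ j k : V, g.Adj j k → CNVul (delE g j k) γ j ∧ CNVul (delE g j k) γ k)


lemma mem_nbrs {V : Type*} [Fintype V] {g : SimpleGraph V} {i j : V} :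
    j ∈ nbrs g i ↔ g.Adj i j := by
  simp [nbrs]

lemma clique_card_le_two {n : ℕ} {g g' : SimpleGraph (Fin n)}
    (hle : g' ≤ g) (hdeg : ∀ v : Fin n, (nbrs g v).card ≤ 1)
    {C : Finset (Fin n)} (hC : g'.IsClique ↑C) : C.card ≤ 2 := by
  by_contra h
  push_neg at h
  obtain ⟨a, ha⟩ := Finset.card_pos.mp (by omega : 0 < C.card)
  have h2 : 2 ≤ (C.erase a).card := by
    rw [Finset.card_erase_of_mem ha]; omega
  obtain ⟨b, hb, c, hc, hbc⟩ := Finset.one_lt_card.mp (by omega : 1 < (C.erase a).card)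
  have hab : g.Adj a b := hle (hC ha (Finset.mem_of_mem_erase hb)
    (Ne.symm (Finset.ne_of_mem_erase hb)))
  have hac : g.Adj a c := hle (hC ha (Finset.mem_of_mem_erase hc)
    (Ne.symm (Finset.ne_of_mem_erase hc)))
  have hsub : ({b, c} : Finset (Fin n)) ⊆ nbrs g a := by
    intro x hx
    rcases Finset.mem_insert.mp hx with rfl | hx
    · exact mem_nbrs.mpr hab
    · rw [Finset.mem_singleton.mp hx]; exact mem_nbrs.mpr hac
  have := Finset.card_le_card hsub
  rw [Finset.card_pair hbc] at this
  have := hdeg a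
  omega

/-- with `γ ≥ 1`, no nonempty network of maximum degree at most 1 is
CN-war-stable. -/
theorem no_cn_stable_maxdeg_one {n : ℕ} (hn : 3 ≤ n) (γ : ℝ) (hγ : 1 ≤ γ)
    (g : SimpleGraph (Fin n)) (hne : ∃ u v : Fin n, g.Adj u v)
    (hdeg : ∀ v : Fin n, (nbrs g v).card ≤ 1) :
    ¬ CNWarStable g γ := by
  obtain ⟨u, v, huv⟩ := hne
  have huvne : u ≠ v := huv.ne
  -- v's only neighbor is u
  have hvnbr : ∀ j, g.Adj u j → j = v := by
    intro j hj
    by_contra hne'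
    have hsub : ({v, j} : Finset (Fin n)) ⊆ nbrs g u := by
      intro x hx
      rcases Finset.mem_insert.mp hx with rfl | hx
      · exact mem_nbrs.mpr huv
      · rw [Finset.mem_singleton.mp hx]; exact mem_nbrs.mpr hj
    have := Finset.card_le_card hsub
    rw [Finset.card_pair (Ne.symm hne')] at this
    have := hdeg u
    omega
  -- find a third vertex w
  have hw : ∃ w : Fin n, w ≠ u ∧ w ≠ v := by
    by_contra h
    push_neg at h
    have hsub : (Finset.univ : Finset (Fin n)) ⊆ {u, v} := by
      intro x _
      rcases eq_or_ne x u with rfl | hx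
      · exact Finset.mem_insert_self _ _
      · rw [h x hx]
        exact Finset.mem_insert_of_mem (Finset.mem_singleton_self _)
    have := Finset.card_le_card hsub
    simp [Finset.card_univ, huvne] at this
    have : ({u, v} : Finset (Fin n)).card ≤ 2 := Finset.card_insert_le _ _ |>.trans (by simp)
    omega
  obtain ⟨w, hwu, hwv⟩ := hw
  rintro ⟨hS1, hS2, hS3⟩
  rcases lt_or_ge γ 2 with hγ2 | hγ2
  · -- γ < 2: use S2 adding edge v w, u becomes vulnerable
    have hgvw : ¬ g.Adj v w := by
      intro h
      have : g.Adj u w := by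
        exact absurd h (by
          intro h'
          have hsub : ({u, w} : Finset (Fin n)) ⊆ nbrs g v := by
            intro x hx
            rcases Finset.mem_insert.mp hx with rfl | hx
            · exact mem_nbrs.mpr huv.symm
            · rw [Finset.mem_singleton.mp hx]; exact mem_nbrs.mpr h'
          have := Finset.card_le_card hsub
          rw [Finset.card_pair (Ne.symm hwu)] at this
          have := hdeg v
          omega)
      exact hwv (hvnbr w this) |>.elim
    apply hS2 v w (Ne.symm hwv) hgvw u
    refine ⟨{v, w}, ?_, ?_, ?_⟩
    · -- clique
      intro a ha b hb hab
      simp only [Finset.coe_insert, Finset.coe_singleton, Set.mem_insert_iff,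
        Set.mem_singleton_iff] at ha hb
      have hadj : (addE g v w).Adj v w := by
        unfold addE
        rw [SimpleGraph.sup_adj]
        right
        rw [SimpleGraph.fromEdgeSet_adj]
        exact ⟨Set.mem_singleton _, Ne.symm hwv⟩
      rcases ha with rfl | rfl <;> rcases hb with rfl | rfl
      · exact absurd rfl hab
      · exact hadj
      · exact hadj.symm
      · exact absurd rfl hab
    · -- u ∉ {v, w}
      simp only [Finset.mem_insert, Finset.mem_singleton]
      push_neg
      exact ⟨huvne, Ne.symm hwu⟩
    · -- inequality
      have hdiff : (nbrs (addE g v w) u \ {v, w}) = ∅ := by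
        apply Finset.eq_empty_of_forall_notMem
        intro x hx
        rw [Finset.mem_sdiff] at hx
        obtain ⟨hx1, hx2⟩ := hx
        have hadj := mem_nbrs.mp hx1
        unfold addE at hadj
        rw [SimpleGraph.sup_adj] at hadj
        rcases hadj with h | h
        · exact hx2 (by simp [hvnbr x h])
        · rw [SimpleGraph.fromEdgeSet_adj] at h
          obtain ⟨h1, _⟩ := h
          rw [Set.mem_singleton_iff, Sym2.eq_iff] at h1
          rcases h1 with ⟨rfl, rfl⟩ | ⟨rfl, rfl⟩
          · exact huvne rfl
          · exact hwu rfl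
      rw [hdiff]
      have hcard : ({v, w} : Finset (Fin n)).card = 2 := Finset.card_pair (Ne.symm hwv)
      rw [hcard]
      simpa using hγ2
  · -- γ ≥ 2: use S3 on edge u v
    obtain ⟨C, hCclique, _, hlt⟩ := (hS3 u v huv).1
    have hle : delE g u v ≤ g := SimpleGraph.deleteEdges_le _
    have hcard : C.card ≤ 2 := clique_card_le_two hle hdeg hCclique
    have h1 : γ ≤ γ * (1 + ((nbrs (delE g u v) u) \ C).card) := by
      nlinarith [Nat.cast_nonneg (α := ℝ) ((nbrs (delE g u v) u \ C).card)]
    have h2 : (C.card : ℝ) ≤ 2 := by exact_mod_cast hcard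
    linarith
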